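/- There exists a hedonic diversity game in which all agents have naturally single-peaked preferences (with indifferences allowed) that admits an infinite sequence of IS deviations starting from the singleton partition in which every deviation satisfies solitary homogeneity. -/
import Mathlib


/-- A partition of the agent set `A`, encoded by the map sending each agent to
the coalition containing it. -/
def IsPartition {A : Type*} [DecidableEq A] (π : A → Finset A) : Prop :=
  (∀ i, i ∈ π i) ∧ ∀ i j, i ∈ π j → π i = π j

/-- Strict part of a weak preference relation `r`. -/
def StrictPref {α : Type*} (r : α → α → Prop) (x y : α) : Prop :=
  r x y ∧ ¬ r y x

/-- `π'` is obtained from `π` by an IS deviation of agent `i`, where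
`wp j C D` means that agent `j` weakly prefers coalition `C` to coalition `D`. -/
def IsISDeviation {A : Type*} [DecidableEq A]
    (wp : A → Finset A → Finset A → Prop) (π π' : A → Finset A) (i : A) : Prop :=
  π' i ≠ π i ∧
  (∀ j, j ≠ i → (π' j).erase i = (π j).erase i) ∧
  StrictPref (wp i) (π' i) (π i) ∧
  ∀ j ∈ (π' i).erase i, wp j (π' j) (π j)

/-- One step of the dynamics of IS deviations between partitions. -/
def ISStep {A : Type*} [DecidableEq A]
    (wp : A → Finset A → Finset A → Prop) (π π' : A → Finset A) : Prop :=
  IsPartition π ∧ IsPartition π' ∧ ∃ i, IsISDeviation wp π π' i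

/-- A partition is individually stable if no IS deviation from it is possible. -/
def IndividuallyStable {A : Type*} [DecidableEq A]
    (wp : A → Finset A → Finset A → Prop) (π : A → Finset A) : Prop :=
  IsPartition π ∧ ∀ π' : A → Finset A, ¬ ISStep wp π π'

/-- `r` is a weak order (total preorder) on the set `S`. -/
def WeakOrderOn {α : Type*} (r : α → α → Prop) (S : Set α) : Prop :=
  (∀ x ∈ S, ∀ y ∈ S, r x y ∨ r y x) ∧
  ∀ x ∈ S, ∀ y ∈ S, ∀ z ∈ S, r x y → r y z → r x z

/-- `r` is antisymmetric on `S`, i.e. the preferences are strict. -/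
def StrictPrefsOn {α : Type*} (r : α → α → Prop) (S : Set α) : Prop :=
  ∀ x ∈ S, ∀ y ∈ S, r x y → r y x → x = y

/-- `r` is (naturally) single-peaked on `S` with respect to the natural linear
order of `α`: whenever `y` lies strictly between `x` and `z`, `x ≻ y` implies `y ≿ z`. -/
def SinglePeakedOn {α : Type*} [LinearOrder α] (r : α → α → Prop) (S : Set α) : Prop :=
  ∀ x ∈ S, ∀ y ∈ S, ∀ z ∈ S,
    ((x < y ∧ y < z) ∨ (z < y ∧ y < x)) → StrictPref r x y → r y z

/-- The fraction of red agents (members of `R`) in the coalition `C`. -/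
def redRatio {A : Type*} [DecidableEq A] (R : Finset A) (C : Finset A) : ℚ :=
  ((R ∩ C).card : ℚ) / (C.card : ℚ)

/-- The set of ratios `p/q` with `0 ≤ p ≤ r` and `1 ≤ q ≤ n`. -/
def RatioSet (r n : ℕ) : Set ℚ :=
  {x : ℚ | ∃ p q : ℕ, p ≤ r ∧ 1 ≤ q ∧ q ≤ n ∧ x = (p : ℚ) / (q : ℚ)}

/-- Coalition preferences of a hedonic diversity game with red agents `R`:
coalitions are compared by their fraction of red agents via the ratio
preferences `rp`. -/
def hdgPref {A : Type*} [DecidableEq A] (R : Finset A) (rp : A → ℚ → ℚ → Prop) :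
    A → Finset A → Finset A → Prop :=
  fun i C D => rp i (redRatio R C) (redRatio R D)

/-- A coalition is homogeneous if it consists only of red agents or only of
blue agents. -/
def HomogeneousCoalition {A : Type*} [DecidableEq A] (R : Finset A) (C : Finset A) : Prop :=
  C ⊆ R ∨ ∀ a ∈ C, a ∉ R

/-- One step of the dynamics of IS deviations in a hedonic diversity game in
which the deviation satisfies solitary homogeneity: if the target coalition of
the deviator is homogeneous, then it is a singleton. -/
def ISStepSH {A : Type*} [DecidableEq A] (R : Finset A) (rp : A → ℚ → ℚ → Prop)
    (π π' : A → Finset A) : Prop :=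
  IsPartition π ∧ IsPartition π' ∧
  ∃ i, IsISDeviation (hdgPref R rp) π π' i ∧
    (HomogeneousCoalition R (π' i) → (π' i).card = 1)


section HDGExample

/-- A three-plateau step function. -/
def stepf (a b : ℚ) (u v w : ℕ) : ℚ → ℕ := fun x => if x < a then u else if x < b then v else w

theorem stepf_qc (a b : ℚ) (u v w : ℕ) (h : min u w ≤ v) :
    ∀ x y z : ℚ, x ≤ y → y ≤ z → min (stepf a b u v w x) (stepf a b u v w z) ≤ stepf a b u v w y := by
  intro x y z hxy hyz
  unfold stepf
  split_ifs <;> first | omega | linarith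

/-- Preferences induced by a utility function. -/
def utilPref (f : ℚ → ℕ) : ℚ → ℚ → Prop := fun x y => f y ≤ f x

instance (f : ℚ → ℕ) (x y : ℚ) : Decidable (utilPref f x y) := Nat.decLe _ _

theorem utilPref_weakOrder (f : ℚ → ℕ) (S : Set ℚ) : WeakOrderOn (utilPref f) S := by
  constructor
  · intro x _ y _; exact (Nat.le_total (f y) (f x)).imp id id
  · intro x _ y _ z _ h1 h2; exact le_trans h2 h1

theorem utilPref_SP (f : ℚ → ℕ)
    (hq : ∀ x y z : ℚ, x ≤ y → y ≤ z → min (f x) (f z) ≤ f y) (S : Set ℚ) :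
    SinglePeakedOn (utilPref f) S := by
  intro x _ y _ z _ hbet hsp
  have hxy : f y < f x := by
    rcases hsp with ⟨h1, h2⟩
    simpa [utilPref, not_le] using h2
  rcases hbet with ⟨h1, h2⟩ | ⟨h1, h2⟩
  · have := hq x y z h1.le h2.le
    unfold utilPref; omega
  · have := hq z y x h1.le h2.le
    unfold utilPref; omega

/-- Utility functions of the six agents. -/
def exF : Fin 6 → ℚ → ℕ
  | 0 => stepf 1 1 1 1 0
  | 1 => stepf (1/2) (1/2) 1 1 0
  | 2 => stepf (1/5) (1/2) 1 2 0
  | 3 => stepf (1/5) (2/3) 1 2 0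
  | 4 => stepf (1/5) (1/2) 0 1 2
  | 5 => stepf (1/5) (1/4) 1 2 0

instance (π : Fin 6 → Finset (Fin 6)) : Decidable (IsPartition π) := by
  unfold IsPartition; infer_instance

instance (C : Finset (Fin 6)) : Decidable (HomogeneousCoalition exR C) := by
  unfold HomogeneousCoalition; infer_instance

/-- The red agents. -/
def exR : Finset (Fin 6) := {0, 1}

theorem redRatio_eq (C : Finset (Fin 6)) (p s : ℕ)
    (h1 : (exR ∩ C).card = p) (h2 : C.card = s) :
    redRatio exR C = (p : ℚ) / (s : ℚ) := by
  rw [redRatio, h1, h2]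

def exP0 : Fin 6 → Finset (Fin 6) := ![{0, 3}, {1}, {2}, {0, 3}, {4}, {5}]

def exP1 : Fin 6 → Finset (Fin 6) := ![{0, 2, 3}, {1}, {0, 2, 3}, {0, 2, 3}, {4}, {5}]

def exP2 : Fin 6 → Finset (Fin 6) := ![{0, 2, 3, 4}, {1}, {0, 2, 3, 4}, {0, 2, 3, 4}, {0, 2, 3, 4}, {5}]

def exP3 : Fin 6 → Finset (Fin 6) := ![{0, 2, 3, 4, 5}, {1}, {0, 2, 3, 4, 5}, {0, 2, 3, 4, 5}, {0, 2, 3, 4, 5}, {0, 2, 3, 4, 5}]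

def exP4 : Fin 6 → Finset (Fin 6) := ![{0, 2, 3, 5}, {1, 4}, {0, 2, 3, 5}, {0, 2, 3, 5}, {1, 4}, {0, 2, 3, 5}]

def exP5 : Fin 6 → Finset (Fin 6) := ![{0, 1, 2, 3, 5}, {0, 1, 2, 3, 5}, {0, 1, 2, 3, 5}, {0, 1, 2, 3, 5}, {4}, {0, 1, 2, 3, 5}]

def exP6 : Fin 6 → Finset (Fin 6) := ![{0, 1, 2, 3}, {0, 1, 2, 3}, {0, 1, 2, 3}, {0, 1, 2, 3}, {4}, {5}]

def exP7 : Fin 6 → Finset (Fin 6) := ![{0, 1, 3}, {0, 1, 3}, {2}, {0, 1, 3}, {4}, {5}]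

def exP8 : Fin 6 → Finset (Fin 6) := ![{0, 1}, {0, 1}, {2}, {3}, {4}, {5}]

theorem exStep0L : ISStepSH exR (fun i => utilPref (exF i)) (fun a => {a}) exP0 := by
  refine ⟨by decide, by decide, 0, ⟨by decide, by decide, ⟨?_, ?_⟩, ?_⟩, by decide⟩
  · show utilPref (exF 0) (redRatio exR {0, 3}) (redRatio exR {0})
    rw [redRatio_eq {0, 3} 1 2 (by decide) (by decide), redRatio_eq {0} 1 1 (by decide) (by decide)]
    norm_num [utilPref, exF, stepf]
  · show ¬ utilPref (exF 0) (redRatio exR {0}) (redRatio exR {0, 3})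
    rw [redRatio_eq {0, 3} 1 2 (by decide) (by decide), redRatio_eq {0} 1 1 (by decide) (by decide)]
    norm_num [utilPref, exF, stepf]
  · intro j hj
    have hj' : j = 3 := by revert j; decide
    rcases hj' with rfl
    · show utilPref (exF 3) (redRatio exR {0, 3}) (redRatio exR {3})
      rw [redRatio_eq {0, 3} 1 2 (by decide) (by decide), redRatio_eq {3} 0 1 (by decide) (by decide)]
      norm_num [utilPref, exF, stepf]

theorem exStep1L : ISStepSH exR (fun i => utilPref (exF i)) exP0 exP1 := by
  refine ⟨by decide, by decide, 2, ⟨by decide, by decide, ⟨?_, ?_⟩, ?_⟩, by decide⟩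
  · show utilPref (exF 2) (redRatio exR {0, 2, 3}) (redRatio exR {2})
    rw [redRatio_eq {0, 2, 3} 1 3 (by decide) (by decide), redRatio_eq {2} 0 1 (by decide) (by decide)]
    norm_num [utilPref, exF, stepf]
  · show ¬ utilPref (exF 2) (redRatio exR {2}) (redRatio exR {0, 2, 3})
    rw [redRatio_eq {0, 2, 3} 1 3 (by decide) (by decide), redRatio_eq {2} 0 1 (by decide) (by decide)]
    norm_num [utilPref, exF, stepf]
  · intro j hj
    have hj' : j = 0 ∨ j = 3 := by revert j; decide
    rcases hj' with rfl|rfl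
    · show utilPref (exF 0) (redRatio exR {0, 2, 3}) (redRatio exR {0, 3})
      rw [redRatio_eq {0, 2, 3} 1 3 (by decide) (by decide), redRatio_eq {0, 3} 1 2 (by decide) (by decide)]
      norm_num [utilPref, exF, stepf]
    · show utilPref (exF 3) (redRatio exR {0, 2, 3}) (redRatio exR {0, 3})
      rw [redRatio_eq {0, 2, 3} 1 3 (by decide) (by decide), redRatio_eq {0, 3} 1 2 (by decide) (by decide)]
      norm_num [utilPref, exF, stepf]

theorem exStep2L : ISStepSH exR (fun i => utilPref (exF i)) exP1 exP2 := by
  refine ⟨by decide, by decide, 4, ⟨by decide, by decide, ⟨?_, ?_⟩, ?_⟩, by decide⟩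
  · show utilPref (exF 4) (redRatio exR {0, 2, 3, 4}) (redRatio exR {4})
    rw [redRatio_eq {0, 2, 3, 4} 1 4 (by decide) (by decide), redRatio_eq {4} 0 1 (by decide) (by decide)]
    norm_num [utilPref, exF, stepf]
  · show ¬ utilPref (exF 4) (redRatio exR {4}) (redRatio exR {0, 2, 3, 4})
    rw [redRatio_eq {0, 2, 3, 4} 1 4 (by decide) (by decide), redRatio_eq {4} 0 1 (by decide) (by decide)]
    norm_num [utilPref, exF, stepf]
  · intro j hj
    have hj' : j = 0 ∨ j = 2 ∨ j = 3 := by revert j; decide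
    rcases hj' with rfl|rfl|rfl
    · show utilPref (exF 0) (redRatio exR {0, 2, 3, 4}) (redRatio exR {0, 2, 3})
      rw [redRatio_eq {0, 2, 3, 4} 1 4 (by decide) (by decide), redRatio_eq {0, 2, 3} 1 3 (by decide) (by decide)]
      norm_num [utilPref, exF, stepf]
    · show utilPref (exF 2) (redRatio exR {0, 2, 3, 4}) (redRatio exR {0, 2, 3})
      rw [redRatio_eq {0, 2, 3, 4} 1 4 (by decide) (by decide), redRatio_eq {0, 2, 3} 1 3 (by decide) (by decide)]
      norm_num [utilPref, exF, stepf]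
    · show utilPref (exF 3) (redRatio exR {0, 2, 3, 4}) (redRatio exR {0, 2, 3})
      rw [redRatio_eq {0, 2, 3, 4} 1 4 (by decide) (by decide), redRatio_eq {0, 2, 3} 1 3 (by decide) (by decide)]
      norm_num [utilPref, exF, stepf]

theorem exStep3L : ISStepSH exR (fun i => utilPref (exF i)) exP2 exP3 := by
  refine ⟨by decide, by decide, 5, ⟨by decide, by decide, ⟨?_, ?_⟩, ?_⟩, by decide⟩
  · show utilPref (exF 5) (redRatio exR {0, 2, 3, 4, 5}) (redRatio exR {5})
    rw [redRatio_eq {0, 2, 3, 4, 5} 1 5 (by decide) (by decide), redRatio_eq {5} 0 1 (by decide) (by decide)]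
    norm_num [utilPref, exF, stepf]
  · show ¬ utilPref (exF 5) (redRatio exR {5}) (redRatio exR {0, 2, 3, 4, 5})
    rw [redRatio_eq {0, 2, 3, 4, 5} 1 5 (by decide) (by decide), redRatio_eq {5} 0 1 (by decide) (by decide)]
    norm_num [utilPref, exF, stepf]
  · intro j hj
    have hj' : j = 0 ∨ j = 2 ∨ j = 3 ∨ j = 4 := by revert j; decide
    rcases hj' with rfl|rfl|rfl|rfl
    · show utilPref (exF 0) (redRatio exR {0, 2, 3, 4, 5}) (redRatio exR {0, 2, 3, 4})
      rw [redRatio_eq {0, 2, 3, 4, 5} 1 5 (by decide) (by decide), redRatio_eq {0, 2, 3, 4} 1 4 (by decide) (by decide)]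
      norm_num [utilPref, exF, stepf]
    · show utilPref (exF 2) (redRatio exR {0, 2, 3, 4, 5}) (redRatio exR {0, 2, 3, 4})
      rw [redRatio_eq {0, 2, 3, 4, 5} 1 5 (by decide) (by decide), redRatio_eq {0, 2, 3, 4} 1 4 (by decide) (by decide)]
      norm_num [utilPref, exF, stepf]
    · show utilPref (exF 3) (redRatio exR {0, 2, 3, 4, 5}) (redRatio exR {0, 2, 3, 4})
      rw [redRatio_eq {0, 2, 3, 4, 5} 1 5 (by decide) (by decide), redRatio_eq {0, 2, 3, 4} 1 4 (by decide) (by decide)]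
      norm_num [utilPref, exF, stepf]
    · show utilPref (exF 4) (redRatio exR {0, 2, 3, 4, 5}) (redRatio exR {0, 2, 3, 4})
      rw [redRatio_eq {0, 2, 3, 4, 5} 1 5 (by decide) (by decide), redRatio_eq {0, 2, 3, 4} 1 4 (by decide) (by decide)]
      norm_num [utilPref, exF, stepf]

theorem exStep4L : ISStepSH exR (fun i => utilPref (exF i)) exP3 exP4 := by
  refine ⟨by decide, by decide, 4, ⟨by decide, by decide, ⟨?_, ?_⟩, ?_⟩, by decide⟩
  · show utilPref (exF 4) (redRatio exR {1, 4}) (redRatio exR {0, 2, 3, 4, 5})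
    rw [redRatio_eq {1, 4} 1 2 (by decide) (by decide), redRatio_eq {0, 2, 3, 4, 5} 1 5 (by decide) (by decide)]
    norm_num [utilPref, exF, stepf]
  · show ¬ utilPref (exF 4) (redRatio exR {0, 2, 3, 4, 5}) (redRatio exR {1, 4})
    rw [redRatio_eq {1, 4} 1 2 (by decide) (by decide), redRatio_eq {0, 2, 3, 4, 5} 1 5 (by decide) (by decide)]
    norm_num [utilPref, exF, stepf]
  · intro j hj
    have hj' : j = 1 := by revert j; decide
    rcases hj' with rfl
    · show utilPref (exF 1) (redRatio exR {1, 4}) (redRatio exR {1})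
      rw [redRatio_eq {1, 4} 1 2 (by decide) (by decide), redRatio_eq {1} 1 1 (by decide) (by decide)]
      norm_num [utilPref, exF, stepf]

theorem exStep5L : ISStepSH exR (fun i => utilPref (exF i)) exP4 exP5 := by
  refine ⟨by decide, by decide, 1, ⟨by decide, by decide, ⟨?_, ?_⟩, ?_⟩, by decide⟩
  · show utilPref (exF 1) (redRatio exR {0, 1, 2, 3, 5}) (redRatio exR {1, 4})
    rw [redRatio_eq {0, 1, 2, 3, 5} 2 5 (by decide) (by decide), redRatio_eq {1, 4} 1 2 (by decide) (by decide)]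
    norm_num [utilPref, exF, stepf]
  · show ¬ utilPref (exF 1) (redRatio exR {1, 4}) (redRatio exR {0, 1, 2, 3, 5})
    rw [redRatio_eq {0, 1, 2, 3, 5} 2 5 (by decide) (by decide), redRatio_eq {1, 4} 1 2 (by decide) (by decide)]
    norm_num [utilPref, exF, stepf]
  · intro j hj
    have hj' : j = 0 ∨ j = 2 ∨ j = 3 ∨ j = 5 := by revert j; decide
    rcases hj' with rfl|rfl|rfl|rfl
    · show utilPref (exF 0) (redRatio exR {0, 1, 2, 3, 5}) (redRatio exR {0, 2, 3, 5})
      rw [redRatio_eq {0, 1, 2, 3, 5} 2 5 (by decide) (by decide), redRatio_eq {0, 2, 3, 5} 1 4 (by decide) (by decide)]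
      norm_num [utilPref, exF, stepf]
    · show utilPref (exF 2) (redRatio exR {0, 1, 2, 3, 5}) (redRatio exR {0, 2, 3, 5})
      rw [redRatio_eq {0, 1, 2, 3, 5} 2 5 (by decide) (by decide), redRatio_eq {0, 2, 3, 5} 1 4 (by decide) (by decide)]
      norm_num [utilPref, exF, stepf]
    · show utilPref (exF 3) (redRatio exR {0, 1, 2, 3, 5}) (redRatio exR {0, 2, 3, 5})
      rw [redRatio_eq {0, 1, 2, 3, 5} 2 5 (by decide) (by decide), redRatio_eq {0, 2, 3, 5} 1 4 (by decide) (by decide)]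
      norm_num [utilPref, exF, stepf]
    · show utilPref (exF 5) (redRatio exR {0, 1, 2, 3, 5}) (redRatio exR {0, 2, 3, 5})
      rw [redRatio_eq {0, 1, 2, 3, 5} 2 5 (by decide) (by decide), redRatio_eq {0, 2, 3, 5} 1 4 (by decide) (by decide)]
      norm_num [utilPref, exF, stepf]

theorem exStep6L : ISStepSH exR (fun i => utilPref (exF i)) exP5 exP6 := by
  refine ⟨by decide, by decide, 5, ⟨by decide, by decide, ⟨?_, ?_⟩, ?_⟩, by decide⟩
  · show utilPref (exF 5) (redRatio exR {5}) (redRatio exR {0, 1, 2, 3, 5})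
    rw [redRatio_eq {5} 0 1 (by decide) (by decide), redRatio_eq {0, 1, 2, 3, 5} 2 5 (by decide) (by decide)]
    norm_num [utilPref, exF, stepf]
  · show ¬ utilPref (exF 5) (redRatio exR {0, 1, 2, 3, 5}) (redRatio exR {5})
    rw [redRatio_eq {5} 0 1 (by decide) (by decide), redRatio_eq {0, 1, 2, 3, 5} 2 5 (by decide) (by decide)]
    norm_num [utilPref, exF, stepf]
  · intro j hj
    rw [show ((_ : Finset (Fin 6)).erase _) = ∅ from by decide] at hj
    exact absurd hj (Finset.notMem_empty j)

theorem exStep7L : ISStepSH exR (fun i => utilPref (exF i)) exP6 exP7 := by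
  refine ⟨by decide, by decide, 2, ⟨by decide, by decide, ⟨?_, ?_⟩, ?_⟩, by decide⟩
  · show utilPref (exF 2) (redRatio exR {2}) (redRatio exR {0, 1, 2, 3})
    rw [redRatio_eq {2} 0 1 (by decide) (by decide), redRatio_eq {0, 1, 2, 3} 2 4 (by decide) (by decide)]
    norm_num [utilPref, exF, stepf]
  · show ¬ utilPref (exF 2) (redRatio exR {0, 1, 2, 3}) (redRatio exR {2})
    rw [redRatio_eq {2} 0 1 (by decide) (by decide), redRatio_eq {0, 1, 2, 3} 2 4 (by decide) (by decide)]
    norm_num [utilPref, exF, stepf]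
  · intro j hj
    rw [show ((_ : Finset (Fin 6)).erase _) = ∅ from by decide] at hj
    exact absurd hj (Finset.notMem_empty j)

theorem exStep8L : ISStepSH exR (fun i => utilPref (exF i)) exP7 exP8 := by
  refine ⟨by decide, by decide, 3, ⟨by decide, by decide, ⟨?_, ?_⟩, ?_⟩, by decide⟩
  · show utilPref (exF 3) (redRatio exR {3}) (redRatio exR {0, 1, 3})
    rw [redRatio_eq {3} 0 1 (by decide) (by decide), redRatio_eq {0, 1, 3} 2 3 (by decide) (by decide)]
    norm_num [utilPref, exF, stepf]
  · show ¬ utilPref (exF 3) (redRatio exR {0, 1, 3}) (redRatio exR {3})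
    rw [redRatio_eq {3} 0 1 (by decide) (by decide), redRatio_eq {0, 1, 3} 2 3 (by decide) (by decide)]
    norm_num [utilPref, exF, stepf]
  · intro j hj
    rw [show ((_ : Finset (Fin 6)).erase _) = ∅ from by decide] at hj
    exact absurd hj (Finset.notMem_empty j)

theorem exStep9L : ISStepSH exR (fun i => utilPref (exF i)) exP8 exP0 := by
  refine ⟨by decide, by decide, 0, ⟨by decide, by decide, ⟨?_, ?_⟩, ?_⟩, by decide⟩
  · show utilPref (exF 0) (redRatio exR {0, 3}) (redRatio exR {0, 1})
    rw [redRatio_eq {0, 3} 1 2 (by decide) (by decide), redRatio_eq {0, 1} 2 2 (by decide) (by decide)]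
    norm_num [utilPref, exF, stepf]
  · show ¬ utilPref (exF 0) (redRatio exR {0, 1}) (redRatio exR {0, 3})
    rw [redRatio_eq {0, 3} 1 2 (by decide) (by decide), redRatio_eq {0, 1} 2 2 (by decide) (by decide)]
    norm_num [utilPref, exF, stepf]
  · intro j hj
    have hj' : j = 3 := by revert j; decide
    rcases hj' with rfl
    · show utilPref (exF 3) (redRatio exR {0, 3}) (redRatio exR {3})
      rw [redRatio_eq {0, 3} 1 2 (by decide) (by decide), redRatio_eq {3} 0 1 (by decide) (by decide)]
      norm_num [utilPref, exF, stepf]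

/-- The cyclic part of the sequence of partitions, of period 9. -/
def exCyc : Fin 9 → Fin 6 → Finset (Fin 6) :=
  ![exP0, exP1, exP2, exP3, exP4, exP5, exP6, exP7, exP8]

/-- The full sequence of partitions. -/
def exSeq : ℕ → Fin 6 → Finset (Fin 6) :=
  fun k => match k with
  | 0 => fun a => {a}
  | k + 1 => exCyc ⟨k % 9, Nat.mod_lt _ (by norm_num)⟩

theorem exStepCyc : ∀ m : Fin 9,
    ISStepSH exR (fun i => utilPref (exF i)) (exCyc m)
      (exCyc ⟨(m.1 + 1) % 9, Nat.mod_lt _ (by norm_num)⟩) := by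
  intro m
  fin_cases m
  · exact exStep1L
  · exact exStep2L
  · exact exStep3L
  · exact exStep4L
  · exact exStep5L
  · exact exStep6L
  · exact exStep7L
  · exact exStep8L
  · exact exStep9L

end HDGExample


/-- There exists a hedonic diversity game with naturally single-peaked
preferences (indifferences allowed) that admits an infinite sequence of IS
deviations starting from the singleton partition in which every deviation
satisfies solitary homogeneity. -/

theorem hdg_natSP_cycle_from_singletons_SH :
    ∃ (n : ℕ) (R : Finset (Fin n)) (rp : Fin n → ℚ → ℚ → Prop),
      (∀ i, WeakOrderOn (rp i) (RatioSet R.card n)) ∧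
      (∀ i, SinglePeakedOn (rp i) (RatioSet R.card n)) ∧
      ∃ seq : ℕ → Fin n → Finset (Fin n),
        seq 0 = (fun a => {a}) ∧
        ∀ k, ISStepSH R rp (seq k) (seq (k + 1)) := by
  refine ⟨6, exR, fun i => utilPref (exF i), ?_, ?_, exSeq, rfl, ?_⟩
  · intro i; exact utilPref_weakOrder _ _
  · intro i
    apply utilPref_SP
    fin_cases i <;> exact stepf_qc _ _ _ _ _ (by norm_num)
  · intro k
    match k with
    | 0 => exact exStep0L
    | k + 1 =>
      have h9 : (k + 1) % 9 = (k % 9 + 1) % 9 := by omega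
      have := exStepCyc ⟨k % 9, Nat.mod_lt _ (by norm_num)⟩
      show ISStepSH exR _ (exCyc _) (exCyc ⟨(k+1) % 9, _⟩)
      convert this using 2
      exact Fin.ext h9
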